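/- Let M₁ and M₂ be complete deterministic automata over the same finite alphabet Σ with finite state sets Q₁ and Q₂, and let S₁ ⊆ Q₁ and S₂ ⊆ Q₂. Then there exists an ω-word w with inf_{M₁}(w) = S₁ and inf_{M₂}(w) = S₂ if and only if there exists a reachable SCC C of the product automaton M₁ × M₂ with π₁(C) = S₁ and π₂(C) = S₂. -/

import Mathlib

open Filter

/-- Extended transition function: `dstar δ q x` is the state reached from `q` reading `x`. -/
def dstar {Q A : Type*} (δ : Q → A → Q) (q : Q) (x : List A) : Q := x.foldl δ q

/-- The run of a deterministic automaton on an ω-word from state `q`. -/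
def run {Q A : Type*} (δ : Q → A → Q) (q : Q) (w : ℕ → A) : ℕ → Q
  | 0 => q
  | n + 1 => δ (run δ q w n) (w n)

/-- The set of states visited infinitely often by the run on `w` from `q`. -/
def infOcc {Q A : Type*} (δ : Q → A → Q) (q : Q) (w : ℕ → A) : Set Q :=
  {p | ∃ᶠ n in atTop, run δ q w n = p}

/-- `C` is a strongly connected component of the automaton with transitions `δ`. -/
def IsSCC {Q A : Type*} (δ : Q → A → Q) (C : Set Q) : Prop :=
  C.Nonempty ∧ ∀ q₁ ∈ C, ∀ q₂ ∈ C, ∃ x : List A, x ≠ [] ∧ dstar δ q₁ x = q₂ ∧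
    ∀ x', x' <+: x → dstar δ q₁ x' ∈ C

/-- `q` is reachable from the initial state `qι`. -/
def Reachable {Q A : Type*} (δ : Q → A → Q) (qι q : Q) : Prop :=
  ∃ x : List A, dstar δ qι x = q

/-- The ultimately periodic ω-word `u(v)^ω`. -/
def upWord {A : Type*} (u v : List A) (hv : v ≠ []) : ℕ → A := fun n =>
  if h : n < u.length then u[n]
  else v[(n - u.length) % v.length]'(Nat.mod_lt _ (List.length_pos_iff.mpr hv))

/-- The transition function of the product automaton. -/
def prodStep {Q₁ Q₂ A : Type*} (δ₁ : Q₁ → A → Q₁) (δ₂ : Q₂ → A → Q₂) :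
    Q₁ × Q₂ → A → Q₁ × Q₂ := fun p a => (δ₁ p.1 a, δ₂ p.2 a)

/-- The ω-word `x·z` obtained by prepending the finite word `x` to `z`. -/
def prepend {A : Type*} (x : List A) (z : ℕ → A) : ℕ → A := fun n =>
  if h : n < x.length then x[n] else z (n - x.length)

/-! ### Auxiliary lemmas -/

section Aux
variable {Q A : Type*} (δ : Q → A → Q)

/-- The finite segment of `w` of length `n` starting at position `m`. -/
def seg (w : ℕ → A) (m n : ℕ) : List A := (List.range n).map (fun i => w (m + i))

@[simp] lemma seg_length (w : ℕ → A) (m n : ℕ) : (seg w m n).length = n := by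
  simp [seg]

lemma seg_getElem (w : ℕ → A) (m n i : ℕ) (h : i < (seg w m n).length) :
    (seg w m n)[i] = w (m + i) := by
  simp [seg]

lemma seg_take (w : ℕ → A) (m n k : ℕ) (h : k ≤ n) :
    (seg w m n).take k = seg w m k := by
  simp [seg, ← List.map_take, List.take_range, Nat.min_eq_left h]

lemma dstar_append (q : Q) (x y : List A) :
    dstar δ q (x ++ y) = dstar δ (dstar δ q x) y := by
  simp [dstar, List.foldl_append]

lemma run_eq_dstar_seg (q : Q) (w : ℕ → A) (m n : ℕ) :
    run δ q w (m + n) = dstar δ (run δ q w m) (seg w m n) := by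
  induction n with
  | zero => simp [seg, dstar]
  | succ n ih =>
      have : seg w m (n + 1) = seg w m n ++ [w (m + n)] := by
        simp [seg, List.range_succ]
      rw [← Nat.add_assoc, show run δ q w (m + n + 1) = δ (run δ q w (m + n)) (w (m + n)) from rfl,
        ih, this, dstar_append]
      simp [dstar]

lemma run_eq_dstar (q : Q) (w : ℕ → A) (n : ℕ) :
    run δ q w n = dstar δ q (seg w 0 n) := by
  simpa [run] using run_eq_dstar_seg δ q w 0 n

lemma run_add (q : Q) (w : ℕ → A) (m n : ℕ) :
    run δ q w (m + n) = run δ (run δ q w m) (fun k => w (m + k)) n := by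
  induction n with
  | zero => rfl
  | succ n ih => rw [← Nat.add_assoc]; simp only [run, ih]

/-- Pigeonhole: a function to a finite type frequently lands in `S` only if it frequently
equals some element of `S`. -/
lemma freq_exists {α β : Type*} [Finite β] {l : Filter α} {f : α → β} {S : Set β}
    (h : ∃ᶠ n in l, f n ∈ S) : ∃ b ∈ S, ∃ᶠ n in l, f n = b := by
  by_contra hc
  push_neg at hc
  have hev : ∀ b : β, ∀ᶠ n in l, b ∈ S → f n ≠ b := by
    intro b
    by_cases hb : b ∈ S
    · have := hc b hb
      filter_upwards [this] with n hn _
      exact hn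
    · filter_upwards with n hn
      exact absurd hn hb
  have := h.and_eventually (Filter.eventually_all.2 hev)
  obtain ⟨n, hn1, hn2⟩ := this.exists
  exact hn2 (f n) hn1 rfl

variable [Finite Q]

lemma infOcc_nonempty (q : Q) (w : ℕ → A) : (infOcc δ q w).Nonempty := by
  have h : ∃ᶠ n in atTop, run δ q w n ∈ (Set.univ : Set Q) :=
    Filter.Frequently.of_forall (fun n => Set.mem_univ _)
  obtain ⟨b, -, hb⟩ := freq_exists (f := fun n => run δ q w n) (S := (Set.univ : Set Q)) h
  exact ⟨b, hb⟩

lemma eventually_mem_infOcc (q : Q) (w : ℕ → A) :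
    ∀ᶠ n in atTop, run δ q w n ∈ infOcc δ q w := by
  by_contra hc
  rw [Filter.not_eventually] at hc
  have hc' : ∃ᶠ n in atTop, run δ q w n ∈ (infOcc δ q w)ᶜ := hc
  obtain ⟨b, hb, hfreq⟩ := freq_exists hc'
  exact hb hfreq

lemma infOcc_isSCC (q : Q) (w : ℕ → A) : IsSCC δ (infOcc δ q w) := by
  refine ⟨infOcc_nonempty δ q w, ?_⟩
  intro p₁ hp₁ p₂ hp₂
  obtain ⟨N, hN⟩ := Filter.eventually_atTop.1 (eventually_mem_infOcc δ q w)
  obtain ⟨n, hnN, hn⟩ := Filter.frequently_atTop.1 hp₁ N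
  obtain ⟨m, hmn, hm⟩ := Filter.frequently_atTop.1 hp₂ (n + 1)
  have hmn' : n < m := hmn
  refine ⟨seg w n (m - n), ?_, ?_, ?_⟩
  · intro hnil
    have h1 : (seg w n (m - n)).length = 0 := by rw [hnil]; rfl
    rw [seg_length] at h1
    omega
  · rw [← hn, ← run_eq_dstar_seg]
    rw [Nat.add_sub_cancel' (le_of_lt hmn')]
    exact hm
  · intro x' hx'
    have hx'len : x'.length ≤ m - n := by
      have := hx'.length_le
      simpa using this
    have : x' = seg w n x'.length :=
      (List.prefix_iff_eq_take.1 hx').trans (seg_take w n (m - n) x'.length hx'len)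
    rw [this, ← hn, ← run_eq_dstar_seg]
    exact hN _ (le_trans hnN (Nat.le_add_right n _))

omit [Finite Q] in
lemma infOcc_reachable (q : Q) (w : ℕ → A) (p : Q) (hp : p ∈ infOcc δ q w) :
    Reachable δ q p := by
  obtain ⟨n, -, hn⟩ := Filter.frequently_atTop.1 hp 0
  exact ⟨seg w 0 n, by rw [← run_eq_dstar]; exact hn⟩

end Aux

/-! ### Constructing a word from a reachable SCC -/

section Constr
variable {Q A : Type*} (δ : Q → A → Q)

lemma exists_path_visiting (C : Set Q) (hC : IsSCC δ C) (l : List Q) :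
    ∀ c ∈ C, (∀ e ∈ l, e ∈ C) →
      ∃ (v : List A) (d : Q), d ∈ C ∧ dstar δ c v = d ∧
        (∀ x', x' <+: v → dstar δ c x' ∈ C) ∧
        ∀ e ∈ l, ∃ x', x' <+: v ∧ dstar δ c x' = e := by
  induction l with
  | nil =>
      intro c hc _
      refine ⟨[], c, hc, rfl, ?_, by simp⟩
      intro x' hx'
      rw [List.prefix_nil.1 hx']
      exact hc
  | cons e rest ih =>
      intro c hc hl
      have he : e ∈ C := hl e (by simp)
      obtain ⟨x, hxne, hxe, hxpref⟩ := hC.2 c hc e he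
      obtain ⟨v', d, hd, hv'd, hv'pref, hv'vis⟩ := ih e he (fun e' he' => hl e' (by simp [he']))
      refine ⟨x ++ v', d, hd, ?_, ?_, ?_⟩
      · rw [dstar_append, hxe]; exact hv'd
      · intro x' hx'
        by_cases hlen : x'.length ≤ x.length
        · exact hxpref x' (List.prefix_of_prefix_length_le hx' (List.prefix_append x v') hlen)
        · have hxx' : x <+: x' := List.prefix_of_prefix_length_le
            (List.prefix_append x v') hx' (le_of_not_ge hlen)
          obtain ⟨t, rfl⟩ := hxx'
          have ht : t <+: v' := (List.prefix_append_right_inj x).1 hx'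
          rw [dstar_append, hxe]
          exact hv'pref t ht
      · intro e' he'
        rcases List.mem_cons.1 he' with h | h
        · exact ⟨x, List.prefix_append x v', h ▸ hxe⟩
        · obtain ⟨x'', hx''p, hx''⟩ := hv'vis e' h
          refine ⟨x ++ x'', ?_, ?_⟩
          · exact (List.prefix_append_right_inj x).2 hx''p
          · rw [dstar_append, hxe]; exact hx''
  
lemma exists_cycle_visiting (C : Set Q) (hC : IsSCC δ C) (l : List Q)
    (c : Q) (hc : c ∈ C) (hl : ∀ e ∈ l, e ∈ C) :
    ∃ v : List A, v ≠ [] ∧ dstar δ c v = c ∧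
      (∀ x', x' <+: v → dstar δ c x' ∈ C) ∧
      ∀ e ∈ l, ∃ x', x' <+: v ∧ dstar δ c x' = e := by
  obtain ⟨v₁, d, hd, hv₁d, hv₁pref, hv₁vis⟩ := exists_path_visiting δ C hC l c hc hl
  obtain ⟨y, hyne, hyc, hypref⟩ := hC.2 d hd c hc
  refine ⟨v₁ ++ y, by simp [hyne], ?_, ?_, ?_⟩
  · rw [dstar_append, hv₁d]; exact hyc
  · intro x' hx'
    by_cases hlen : x'.length ≤ v₁.length
    · exact hv₁pref x' (List.prefix_of_prefix_length_le hx' (List.prefix_append v₁ y) hlen)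
    · have : v₁ <+: x' := List.prefix_of_prefix_length_le
        (List.prefix_append v₁ y) hx' (le_of_not_ge hlen)
      obtain ⟨t, rfl⟩ := this
      have ht : t <+: y := (List.prefix_append_right_inj v₁).1 hx'
      rw [dstar_append, hv₁d]
      exact hypref t ht
  · intro e he
    obtain ⟨x', hx'p, hx'⟩ := hv₁vis e he
    exact ⟨x', hx'p.trans (List.prefix_append v₁ y), hx'⟩

variable {δ} in
/-- Run of the ultimately-periodic word: after the prefix `u` leading to `c`,
time `t` lands at `dstar δ c (v.take (t % v.length))`, provided `v` is a cycle at `c`. -/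
lemma run_upWord {q c : Q} {u v : List A} (hv : v ≠ []) (hu : dstar δ q u = c)
    (hvc : dstar δ c v = c) (t : ℕ) :
    run δ q (upWord u v hv) (u.length + t) = dstar δ c (v.take (t % v.length)) := by
  have hL : 0 < v.length := List.length_pos_iff.mpr hv
  set L := v.length with hLdef
  set z : ℕ → A := fun k => v[k % L]'(Nat.mod_lt _ hL) with hz
  -- the segment of z over any period-aligned window of length r ≤ L is v.take r
  have hseg : ∀ k r, r ≤ L → seg z (k * L) r = v.take r := by
    intro k r hr
    apply List.ext_getElem
    · simp [Nat.min_eq_left hr]; exact hr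
    · intro i h₁ h₂
      rw [seg_getElem, List.getElem_take]
      simp only [hz]
      congr 1
      have hi : i < r := by simpa using h₁
      rw [Nat.add_comm (k*L) i, Nat.add_mul_mod_self_right]
      exact Nat.mod_eq_of_lt (lt_of_lt_of_le hi hr)
  have hmul : ∀ k, run δ c z (k * L) = c := by
    intro k
    induction k with
    | zero => simp [run]
    | succ k ih =>
        rw [Nat.succ_mul, run_eq_dstar_seg, ih, hseg k L le_rfl, List.take_length]
        exact hvc
  have hrunz : ∀ t, run δ c z t = dstar δ c (v.take (t % L)) := by
    intro t
    conv_lhs => rw [(Nat.div_add_mod t L).symm]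
    rw [run_eq_dstar_seg, Nat.mul_comm L (t / L), hmul, hseg _ _ (le_of_lt (Nat.mod_lt _ hL))]
  -- the run reaches c after reading u
  have hwu : run δ q (upWord u v hv) u.length = c := by
    rw [run_eq_dstar]
    have : seg (upWord u v hv) 0 u.length = u := by
      apply List.ext_getElem
      · simp
      · intro i h₁ h₂
        rw [seg_getElem]
        simp only [upWord, Nat.zero_add]
        rw [dif_pos h₂]
    rw [this, hu]
  have hshift : (fun k => upWord u v hv (u.length + k)) = z := by
    funext k
    simp only [upWord, z]
    rw [dif_neg (by omega)]
    congr 1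
    rw [Nat.add_sub_cancel_left]
  rw [run_add, hwu, hshift, hrunz]

variable {δ} in
lemma exists_word_of_scc [Finite Q] {C : Set Q} (hC : IsSCC δ C) {q : Q}
    (hreach : ∀ p ∈ C, Reachable δ q p) : ∃ w : ℕ → A, infOcc δ q w = C := by
  have hCfin : C.Finite := Set.toFinite C
  obtain ⟨c, hc⟩ := hC.1
  obtain ⟨u, hu⟩ := hreach c hc
  have hl : ∀ e ∈ hCfin.toFinset.toList, e ∈ C := by
    intro e he
    simpa using (hCfin.mem_toFinset).1 (by simpa using he)
  obtain ⟨v, hvne, hvc, hvpref, hvvis⟩ := exists_cycle_visiting δ C hC hCfin.toFinset.toList c hc hl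
  have hL : 0 < v.length := List.length_pos_iff.mpr hvne
  refine ⟨upWord u v hvne, ?_⟩
  ext p
  constructor
  · intro hp
    obtain ⟨n, hn, hrun⟩ := Filter.frequently_atTop.1 hp u.length
    have : n = u.length + (n - u.length) := by omega
    rw [this, run_upWord hvne hu hvc] at hrun
    rw [← hrun]
    exact hvpref _ (List.take_prefix _ _)
  · intro hp
    obtain ⟨x', hx'p, hx'⟩ := hvvis p (by simp [hCfin.mem_toFinset, hp])
    -- find j < v.length with dstar δ c (v.take j) = p
    obtain ⟨j, hj, hjp⟩ : ∃ j, j < v.length ∧ dstar δ c (v.take j) = p := by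
      by_cases hlen : x'.length = v.length
      · refine ⟨0, hL, ?_⟩
        have : x' = v := hx'p.eq_of_length hlen
        rw [List.take_zero]
        show dstar δ c [] = p
        rw [← hx', this, hvc]
        rfl
      · refine ⟨x'.length, lt_of_le_of_ne hx'p.length_le hlen, ?_⟩
        rw [← (List.prefix_iff_eq_take.1 hx'p)]
        exact hx'
    show ∃ᶠ n in atTop, run δ q (upWord u v hvne) n = p
    rw [Filter.frequently_atTop]
    intro N
    refine ⟨u.length + (j + N * v.length), ?_, ?_⟩
    · have : N ≤ N * v.length := Nat.le_mul_of_pos_right N hL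
      omega
    · rw [run_upWord hvne hu hvc, Nat.add_mul_mod_self_right, Nat.mod_eq_of_lt hj]
      exact hjp

end Constr

/-! ### Product automaton lemmas -/

section Prod
variable {Q₁ Q₂ A : Type*} (δ₁ : Q₁ → A → Q₁) (δ₂ : Q₂ → A → Q₂)

lemma run_prod (q₁ : Q₁) (q₂ : Q₂) (w : ℕ → A) (n : ℕ) :
    run (prodStep δ₁ δ₂) (q₁, q₂) w n = (run δ₁ q₁ w n, run δ₂ q₂ w n) := by
  induction n with
  | zero => rfl
  | succ n ih => simp only [run, ih, prodStep]

variable [Finite Q₁] [Finite Q₂]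

lemma infOcc_prod_fst (q₁ : Q₁) (q₂ : Q₂) (w : ℕ → A) :
    Prod.fst '' infOcc (prodStep δ₁ δ₂) (q₁, q₂) w = infOcc δ₁ q₁ w := by
  ext p₁
  constructor
  · rintro ⟨p, hp, rfl⟩
    refine hp.mono ?_
    intro n hn
    rw [run_prod] at hn
    rw [← hn]
  · intro hp
    have h : ∃ᶠ n in atTop,
        run (prodStep δ₁ δ₂) (q₁, q₂) w n ∈ (Prod.fst ⁻¹' {p₁} : Set (Q₁ × Q₂)) := by
      refine hp.mono ?_
      intro n hn
      simp [run_prod, hn]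
    obtain ⟨b, hb, hbfreq⟩ := freq_exists h
    exact ⟨b, hbfreq, hb⟩

lemma infOcc_prod_snd (q₁ : Q₁) (q₂ : Q₂) (w : ℕ → A) :
    Prod.snd '' infOcc (prodStep δ₁ δ₂) (q₁, q₂) w = infOcc δ₂ q₂ w := by
  ext p₂
  constructor
  · rintro ⟨p, hp, rfl⟩
    refine hp.mono ?_
    intro n hn
    rw [run_prod] at hn
    rw [← hn]
  · intro hp
    have h : ∃ᶠ n in atTop,
        run (prodStep δ₁ δ₂) (q₁, q₂) w n ∈ (Prod.snd ⁻¹' {p₂} : Set (Q₁ × Q₂)) := by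
      refine hp.mono ?_
      intro n hn
      simp [run_prod, hn]
    obtain ⟨b, hb, hbfreq⟩ := freq_exists h
    exact ⟨b, hbfreq, hb⟩

end Prod

/-- There is an ω-word whose infinity sets in `M₁` and `M₂` are `S₁` and `S₂` iff there is a
reachable SCC of the product automaton projecting to `S₁` and `S₂`. -/
theorem stmt7 {A Q₁ Q₂ : Type*} [Fintype A] [Fintype Q₁] [Fintype Q₂]
    (δ₁ : Q₁ → A → Q₁) (δ₂ : Q₂ → A → Q₂) (q₁ : Q₁) (q₂ : Q₂)
    (S₁ : Set Q₁) (S₂ : Set Q₂) :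
    (∃ w : ℕ → A, infOcc δ₁ q₁ w = S₁ ∧ infOcc δ₂ q₂ w = S₂) ↔
    (∃ C : Set (Q₁ × Q₂), IsSCC (prodStep δ₁ δ₂) C ∧
      (∀ p ∈ C, Reachable (prodStep δ₁ δ₂) (q₁, q₂) p) ∧
      Prod.fst '' C = S₁ ∧ Prod.snd '' C = S₂) := by
  constructor
  · rintro ⟨w, h1, h2⟩
    refine ⟨infOcc (prodStep δ₁ δ₂) (q₁, q₂) w, infOcc_isSCC _ _ _,
      fun p hp => infOcc_reachable _ _ _ _ hp, ?_, ?_⟩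
    · rw [infOcc_prod_fst, h1]
    · rw [infOcc_prod_snd, h2]
  · rintro ⟨C, hSCC, hreach, hf, hs⟩
    obtain ⟨w, hw⟩ := exists_word_of_scc hSCC hreach
    exact ⟨w, by rw [← hf, ← hw, infOcc_prod_fst], by rw [← hs, ← hw, infOcc_prod_snd]⟩
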